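/- arXiv:1802.04512 — 2 statements merged into one kernel-verified Lean document; each statement's English description precedes it below -/
import Mathlib

section
/- Let U ⊆ ℕ* be a spread, i.e. an inhabited decidable subset closed under prefixes such that every element has a one-step extension in U. Define a ◁_U V iff a ◁_B (¬U ∪ V), where ¬U is the complement of U. Then ◁_U is a cover: it satisfies reflexivity, transitivity, and ↓-right (a ◁_U V and a ◁_U W imply a ◁_U V↓W, with ↓ computed in the Baire order). -/
/-- The formal Baire cover, generated by η, ζ, ϝ. -/
inductive BCov : List ℕ → Set (List ℕ) → Prop
  | eta {a : List ℕ} {U : Set (List ℕ)} : a ∈ U → BCov a U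
  | zeta {a b : List ℕ} {U : Set (List ℕ)} : b <+: a → BCov b U → BCov a U
  | digamma {a : List ℕ} {U : Set (List ℕ)} : (∀ n : ℕ, BCov (a ++ [n]) U) → BCov a U


/-- `U ↓ V`: common refinements (in the reverse prefix order). -/
def Down (U V : Set (List ℕ)) : Set (List ℕ) :=
  {c : List ℕ | ∃ a ∈ U, ∃ b ∈ V, a <+: c ∧ b <+: c}

theorem BCov.mono {a : List ℕ} {V W : Set (List ℕ)} (h : BCov a V) (hVW : V ⊆ W) :
    BCov a W := by
  induction h with
  | eta h => exact .eta (hVW h)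
  | zeta hb _ ih => exact .zeta hb (ih hVW)
  | digamma _ ih => exact .digamma fun n => ih n hVW

theorem BCov.trans' {a : List ℕ} {V W : Set (List ℕ)} (h : BCov a V)
    (hVW : ∀ b ∈ V, BCov b W) : BCov a W := by
  induction h with
  | eta h => exact hVW _ h
  | zeta hb _ ih => exact .zeta hb (ih hVW)
  | digamma _ ih => exact .digamma fun n => ih n hVW

theorem BCov.loc {b : List ℕ} {W : Set (List ℕ)} (h : BCov b W) :
    ∀ a, b <+: a → BCov a {c | a <+: c ∧ ∃ d ∈ W, d <+: c} := by
  induction h with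
  | eta h => exact fun a hba => .eta ⟨List.prefix_refl a, _, h, hba⟩
  | zeta hb _ ih => exact fun a hba => ih a (hb.trans hba)
  | @digamma b _ _ ih =>
    intro a hba
    obtain ⟨t, rfl⟩ := hba
    cases t with
    | nil =>
      rw [List.append_nil]
      exact .digamma fun n => (ih n (b ++ [n]) (List.prefix_refl _)).mono
        (fun c hc => ⟨(List.prefix_append b [n]).trans hc.1, hc.2⟩)
    | cons n t' => exact ih n (b ++ n :: t') ⟨t', by simp⟩

theorem BCov.down {b : List ℕ} {V W : Set (List ℕ)} (h : BCov b V) :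
    ∀ a, b <+: a → BCov a W → BCov a (Down V W) := by
  induction h with
  | @eta b _ h =>
    intro a hba hW
    refine (hW.loc a (List.prefix_refl a)).mono ?_
    rintro c ⟨hac, d, hd, hdc⟩
    exact ⟨b, h, d, hd, hba.trans hac, hdc⟩
  | zeta hb _ ih => exact fun a hba hW => ih a (hb.trans hba) hW
  | @digamma b _ _ ih =>
    intro a hba hW
    obtain ⟨t, rfl⟩ := hba
    cases t with
    | nil =>
      rw [List.append_nil] at hW ⊢
      exact .digamma fun n =>
        ih n (b ++ [n]) (List.prefix_refl _) (.zeta (List.prefix_append b [n]) hW)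
    | cons n t' => exact ih n (b ++ n :: t') ⟨t', by simp⟩ hW

/-- For a spread `U`, the relativised relation `a ◁_U V ≡ a ◁_B (¬U ∪ V)` is a
cover: it satisfies reflexivity, transitivity and ↓-right. -/
theorem spread_cover (U : Set (List ℕ))
    (hdec : ∀ a : List ℕ, a ∈ U ∨ a ∉ U)
    (hne : U.Nonempty)
    (hpre : ∀ a b : List ℕ, a ∈ U → b <+: a → b ∈ U)
    (hext : ∀ a ∈ U, ∃ n : ℕ, a ++ [n] ∈ U) :
    (∀ (a : List ℕ) (V : Set (List ℕ)), a ∈ V → BCov a (Uᶜ ∪ V)) ∧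
    (∀ (a : List ℕ) (V W : Set (List ℕ)), BCov a (Uᶜ ∪ V) →
      (∀ b ∈ V, BCov b (Uᶜ ∪ W)) → BCov a (Uᶜ ∪ W)) ∧
    (∀ (a : List ℕ) (V W : Set (List ℕ)), BCov a (Uᶜ ∪ V) → BCov a (Uᶜ ∪ W) →
      BCov a (Uᶜ ∪ Down V W)) := by
  refine ⟨fun a V ha => .eta (Or.inr ha), ?_, ?_⟩
  · intro a V W h hVW
    refine h.trans' ?_
    rintro b (hb | hb)
    · exact .eta (Or.inl hb)
    · exact hVW b hb
  · intro a V W hV hW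
    refine (hV.down a (List.prefix_refl a) hW).trans' ?_
    rintro c ⟨p, hp, q, hq, hpc, hqc⟩
    rcases hdec c with hc | hc
    · rcases hp with hp | hp
      · exact absurd (hpre c p hc hpc) hp
      · rcases hq with hq | hq
        · exact absurd (hpre c q hc hqc) hq
        · exact .eta (Or.inr ⟨p, hp, q, hq, hpc, hqc⟩)
    · exact .eta (Or.inl hc)
end

section
/- For the formal topology of real numbers with base S = {(p,q) ∈ ℚ × ℚ | p < q} and inductively generated cover ◁_R, and for any (p,q) ∈ S and any finite subset U ⊆ S: (p,q) ◁_{Ip} U if and only if (p,q) ◁_R U, where (p,q) ◁_{Ip} U means every ideal point of R containing (p,q) meets U. -/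
/-- The inductively generated cover of the formal topology of real numbers, on
the base `S = {(p,q) ∈ ℚ × ℚ | p < q}`. -/
inductive RCov : ℚ × ℚ → Set (ℚ × ℚ) → Prop
  | refl {a : ℚ × ℚ} {U : Set (ℚ × ℚ)} : a ∈ U → RCov a U
  | le {p q p' q' : ℚ} {U : Set (ℚ × ℚ)} :
      p' ≤ p → q ≤ q' → RCov (p', q') U → RCov (p, q) U
  | wi {p q : ℚ} {U : Set (ℚ × ℚ)} :
      (∀ p' q' : ℚ, p < p' → p' < q' → q' < q → RCov (p', q') U) → RCov (p, q) U
  | split {p q p' q' : ℚ} {U : Set (ℚ × ℚ)} :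
      p < p' → p' < q' → q' < q → RCov (p, q') U → RCov (p', q) U → RCov (p, q) U

lemma RCov.mono {a : ℚ × ℚ} {U V : Set (ℚ × ℚ)} (h : RCov a U) (hUV : U ⊆ V) :
    RCov a V := by
  induction h with
  | refl h => exact RCov.refl (hUV h)
  | le h1 h2 _ ih => exact RCov.le h1 h2 (ih hUV)
  | wi _ ih => exact RCov.wi (fun p' q' h1 h2 h3 => ih p' q' h1 h2 h3 hUV)
  | split h1 h2 h3 _ _ ih1 ih2 => exact RCov.split h1 h2 h3 (ih1 hUV) (ih2 hUV)

lemma RCov.sound {a : ℚ × ℚ} {U : Set (ℚ × ℚ)} (h : RCov a U) :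
    ∀ x : ℝ, (a.1 : ℝ) < x → x < (a.2 : ℝ) →
      ∃ r ∈ U, (r.1 : ℝ) < x ∧ x < (r.2 : ℝ) := by
  induction h with
  | refl h => exact fun x hx1 hx2 => ⟨_, h, hx1, hx2⟩
  | @le p q p' q' U h1 h2 _ ih =>
      intro x hx1 hx2
      exact ih x (lt_of_le_of_lt (by exact_mod_cast h1) hx1)
        (lt_of_lt_of_le hx2 (by exact_mod_cast h2))
  | @wi p q U _ ih =>
      intro x hx1 hx2
      obtain ⟨p', hp'1, hp'2⟩ := exists_rat_btwn hx1
      obtain ⟨q', hq'1, hq'2⟩ := exists_rat_btwn hx2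
      have hpq' : p' < q' := by exact_mod_cast hp'2.trans hq'1
      exact ih p' q' (by exact_mod_cast hp'1) hpq' (by exact_mod_cast hq'2) x hp'2 hq'1
  | @split p q p' q' U h1 h2 h3 _ _ ih1 ih2 =>
      intro x hx1 hx2
      rcases lt_or_ge x (q' : ℝ) with h | h
      · exact ih1 x hx1 h
      · exact ih2 x (lt_of_lt_of_le (by exact_mod_cast h2) h) hx2

/-- Heine–Borel style completeness: a finite pointwise cover of a closed
rational interval yields an inductive cover. -/
lemma RCov.complete : ∀ n : ℕ, ∀ U : Set (ℚ × ℚ), U.Finite → U.ncard ≤ n →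
    ∀ p q : ℚ, p < q →
    (∀ x : ℝ, (p : ℝ) ≤ x → x ≤ (q : ℝ) →
      ∃ r ∈ U, (r.1 : ℝ) < x ∧ x < (r.2 : ℝ)) →
    RCov (p, q) U := by
  intro n
  induction n using Nat.strong_induction_on with
  | _ n IH =>
  intro U hfin hcard p q hpq hcov
  obtain ⟨⟨a, b⟩, hab, ha, hb⟩ := hcov p le_rfl (by exact_mod_cast hpq.le)
  have ha' : a < p := by exact_mod_cast ha
  have hb' : p < b := by exact_mod_cast hb
  by_cases hqb : q ≤ b
  · exact RCov.le ha'.le hqb (RCov.refl hab)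
  · push_neg at hqb
    -- b < q, so b ∈ [p, q] is covered by some other interval (c, d)
    obtain ⟨⟨c, d⟩, hcd, hc, hd⟩ := hcov b (by exact_mod_cast hb'.le)
      (by exact_mod_cast hqb.le)
    have hc' : c < b := by exact_mod_cast hc
    have hd' : b < d := by exact_mod_cast hd
    have hne : ((c, d) : ℚ × ℚ) ≠ (a, b) := by
      intro h
      simp only [Prod.mk.injEq] at h
      exact absurd (h.2 ▸ hd') (lt_irrefl b)
    obtain ⟨m, hm1, hm2⟩ := exists_between (max_lt hc' hb' : max c p < b)
    have hcm : c < m := lt_of_le_of_lt (le_max_left _ _) hm1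
    have hpm : p < m := lt_of_le_of_lt (le_max_right _ _) hm1
    obtain ⟨β, hβ1, hβ2⟩ := exists_between hm2
    set U' := U \ {((a, b) : ℚ × ℚ)} with hU'
    have hcard' : U'.ncard < n :=
      lt_of_lt_of_le (Set.ncard_diff_singleton_lt_of_mem hab hfin) hcard
    have hcov' : ∀ x : ℝ, (m : ℝ) ≤ x → x ≤ (q : ℝ) →
        ∃ r ∈ U', (r.1 : ℝ) < x ∧ x < (r.2 : ℝ) := by
      intro x hx1 hx2
      rcases lt_or_ge x (b : ℝ) with hxb | hxb
      · refine ⟨(c, d), ⟨hcd, ?_⟩, ?_, ?_⟩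
        · simp only [Set.mem_singleton_iff]; exact hne
        · exact lt_of_lt_of_le (by exact_mod_cast hcm) hx1
        · exact hxb.trans (by exact_mod_cast hd')
      · obtain ⟨r, hr, hr1, hr2⟩ := hcov x
          (le_trans (by exact_mod_cast hpm.le) hx1) hx2
        refine ⟨r, ⟨hr, ?_⟩, hr1, hr2⟩
        simp only [Set.mem_singleton_iff]
        intro hreq
        rw [hreq] at hr2
        exact absurd (hxb.trans_lt hr2) (lt_irrefl _)
    have hmq : m < q := hm2.trans hqb
    have hRmq : RCov (m, q) U :=
      (IH U'.ncard hcard' U' hfin.diff le_rfl m q hmq hcov').mono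
        Set.diff_subset
    have hRpβ : RCov (p, β) U := RCov.le ha'.le hβ2.le (RCov.refl hab)
    exact RCov.split hpm hβ1 (hβ2.trans hqb) hRpβ hRmq

/-- Finite covers in the pointwise and pointfree topologies of the formal reals
coincide. -/
theorem finite_cov_coincide (p q : ℚ) (hpq : p < q)
    (U : Set (ℚ × ℚ)) (hU : ∀ r ∈ U, r.1 < r.2) (hfin : U.Finite) :
    (∀ x : ℝ, (p : ℝ) < x → x < (q : ℝ) →
      ∃ r ∈ U, (r.1 : ℝ) < x ∧ x < (r.2 : ℝ)) ↔ RCov (p, q) U := by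
  constructor
  · intro H
    apply RCov.wi
    intro p' q' h1 h2 h3
    refine RCov.complete U.ncard U hfin le_rfl p' q' h2 ?_
    intro x hx1 hx2
    exact H x (lt_of_lt_of_le (by exact_mod_cast h1) hx1)
      (lt_of_le_of_lt hx2 (by exact_mod_cast h3))
  · intro h
    exact h.sound
end
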